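/- Let 𝒞 be a category with binary products, binary coproducts, and image factorizations (every morphism factors as a strong epimorphism followed by a monomorphism). For an object S, write 2S = S ⊔ S and 3S = S ⊔ S ⊔ S with coprojections ι₁, ι₂ (resp. ι₁, ι₂, ι₃), and let M_S : 3S → (2S) × (2S) × (2S) be the unique morphism whose composites with the three product projections are the copairings [ι₁, ι₁, ι₂], [ι₁, ι₂, ι₁], [ι₂, ι₁, ι₁] : 3S → 2S respectively. Then the following are equivalent: (1) 𝒞 is a majority category; (2) for every object S, writing M_S = r ∘ e with e a strong epimorphism and r a monomorphism, the morphism ⟨ι₁, ι₁, ι₁⟩ : S → (2S) × (2S) × (2S) factors through r. -/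

import Mathlib

open CategoryTheory CategoryTheory.Limits

/-- The triple of morphisms `(a, b, c)` is related by the ternary relation
`(r₁, r₂, r₃)`. -/
def TernaryRelated {C : Type*} [Category C] {R A B D S : C}
    (r₁ : R ⟶ A) (r₂ : R ⟶ B) (r₃ : R ⟶ D) (a : S ⟶ A) (b : S ⟶ B) (c : S ⟶ D) : Prop :=
  ∃ f : S ⟶ R, f ≫ r₁ = a ∧ f ≫ r₂ = b ∧ f ≫ r₃ = c

/-- A category is a majority category when every (jointly monomorphic) internal ternary
relation is strictly closed with respect to the majority matrix. -/
def IsMajorityCategory (C : Type*) [Category C] : Prop :=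
  ∀ ⦃A B D R : C⦄ (r₁ : R ⟶ A) (r₂ : R ⟶ B) (r₃ : R ⟶ D),
    (∀ ⦃S : C⦄ (f g : S ⟶ R),
      f ≫ r₁ = g ≫ r₁ → f ≫ r₂ = g ≫ r₂ → f ≫ r₃ = g ≫ r₃ → f = g) →
    ∀ ⦃S : C⦄ (a₁ a₂ : S ⟶ A) (b₁ b₂ : S ⟶ B) (c₁ c₂ : S ⟶ D),
      TernaryRelated r₁ r₂ r₃ a₁ b₁ c₂ →
      TernaryRelated r₁ r₂ r₃ a₁ b₂ c₁ →
      TernaryRelated r₁ r₂ r₃ a₂ b₁ c₁ →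
      TernaryRelated r₁ r₂ r₃ a₁ b₁ c₁

/-- Characterization of majority categories with binary products, binary coproducts and
image factorizations: `C` is a majority category iff for every object `S`, the canonical
morphism `⟨ι₁, ι₁, ι₁⟩ : S ⟶ 2S ⨯ 2S ⨯ 2S` factors through the image of the canonical
matrix morphism `M_S : 3S ⟶ 2S ⨯ 2S ⨯ 2S`. -/
theorem majority_iff_image_factorization {C : Type*} [Category C]
    [HasBinaryProducts C] [HasBinaryCoproducts C]
    (himg : ∀ ⦃X Y : C⦄ (f : X ⟶ Y), ∃ (I : C) (e : X ⟶ I) (m : I ⟶ Y),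
      StrongEpi e ∧ Mono m ∧ e ≫ m = f) :
    IsMajorityCategory C ↔
      ∀ (S : C) (R : C) (e : (S ⨿ (S ⨿ S)) ⟶ R) (r : R ⟶ ((S ⨿ S) ⨯ ((S ⨿ S) ⨯ (S ⨿ S)))),
        StrongEpi e → Mono r →
        e ≫ r = prod.lift (coprod.desc coprod.inl (coprod.desc coprod.inl coprod.inr))
            (prod.lift (coprod.desc coprod.inl (coprod.desc coprod.inr coprod.inl))
              (coprod.desc coprod.inr (coprod.desc coprod.inl coprod.inl))) →
        ∃ f : S ⟶ R, f ≫ r = prod.lift coprod.inl (prod.lift coprod.inl coprod.inl) := by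
  constructor
  · -- majority ⇒ factorization condition
    intro hmaj S R e r he hr heq
    have heq' : ∀ {Z : C} (h : ((S ⨿ S) ⨯ ((S ⨿ S) ⨯ (S ⨿ S))) ⟶ Z),
        e ≫ r ≫ h = (prod.lift (coprod.desc coprod.inl (coprod.desc coprod.inl coprod.inr))
            (prod.lift (coprod.desc coprod.inl (coprod.desc coprod.inr coprod.inl))
              (coprod.desc coprod.inr (coprod.desc coprod.inl coprod.inl)))) ≫ h := by
      intro Z h
      rw [← Category.assoc, heq]
    have jm : ∀ ⦃T : C⦄ (f g : T ⟶ R),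
        f ≫ (r ≫ prod.fst) = g ≫ (r ≫ prod.fst) →
        f ≫ (r ≫ prod.snd ≫ prod.fst) = g ≫ (r ≫ prod.snd ≫ prod.fst) →
        f ≫ (r ≫ prod.snd ≫ prod.snd) = g ≫ (r ≫ prod.snd ≫ prod.snd) → f = g := by
      intro T f g h1 h2 h3
      rw [← cancel_mono r]
      apply Limits.prod.hom_ext
      · simpa using h1
      · apply Limits.prod.hom_ext
        · simpa using h2
        · simpa using h3
    have rel1 : TernaryRelated (r ≫ prod.fst) (r ≫ prod.snd ≫ prod.fst)
        (r ≫ prod.snd ≫ prod.snd) (coprod.inl : S ⟶ S ⨿ S) coprod.inl coprod.inr :=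
      ⟨coprod.inl ≫ e, by simp [heq', prod.lift_fst, prod.lift_snd, prod.lift_fst_assoc, prod.lift_snd_assoc, coprod.inl_desc, coprod.inr_desc, coprod.inl_desc_assoc, coprod.inr_desc_assoc, prod.map_fst, prod.map_snd, prod.map_fst_assoc, prod.map_snd_assoc, prod.lift_map, prod.comp_lift, coprod.desc_comp], by simp [heq', prod.lift_fst, prod.lift_snd, prod.lift_fst_assoc, prod.lift_snd_assoc, coprod.inl_desc, coprod.inr_desc, coprod.inl_desc_assoc, coprod.inr_desc_assoc, prod.map_fst, prod.map_snd, prod.map_fst_assoc, prod.map_snd_assoc, prod.lift_map, prod.comp_lift, coprod.desc_comp], by simp [heq', prod.lift_fst, prod.lift_snd, prod.lift_fst_assoc, prod.lift_snd_assoc, coprod.inl_desc, coprod.inr_desc, coprod.inl_desc_assoc, coprod.inr_desc_assoc, prod.map_fst, prod.map_snd, prod.map_fst_assoc, prod.map_snd_assoc, prod.lift_map, prod.comp_lift, coprod.desc_comp]⟩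
    have rel2 : TernaryRelated (r ≫ prod.fst) (r ≫ prod.snd ≫ prod.fst)
        (r ≫ prod.snd ≫ prod.snd) (coprod.inl : S ⟶ S ⨿ S) coprod.inr coprod.inl :=
      ⟨(coprod.inl ≫ coprod.inr) ≫ e, by simp [heq', prod.lift_fst, prod.lift_snd, prod.lift_fst_assoc, prod.lift_snd_assoc, coprod.inl_desc, coprod.inr_desc, coprod.inl_desc_assoc, coprod.inr_desc_assoc, prod.map_fst, prod.map_snd, prod.map_fst_assoc, prod.map_snd_assoc, prod.lift_map, prod.comp_lift, coprod.desc_comp], by simp [heq', prod.lift_fst, prod.lift_snd, prod.lift_fst_assoc, prod.lift_snd_assoc, coprod.inl_desc, coprod.inr_desc, coprod.inl_desc_assoc, coprod.inr_desc_assoc, prod.map_fst, prod.map_snd, prod.map_fst_assoc, prod.map_snd_assoc, prod.lift_map, prod.comp_lift, coprod.desc_comp], by simp [heq', prod.lift_fst, prod.lift_snd, prod.lift_fst_assoc, prod.lift_snd_assoc, coprod.inl_desc, coprod.inr_desc, coprod.inl_desc_assoc, coprod.inr_desc_assoc, prod.map_fst, prod.map_snd, prod.map_fst_assoc, prod.map_snd_assoc,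 prod.lift_map, prod.comp_lift, coprod.desc_comp]⟩
    have rel3 : TernaryRelated (r ≫ prod.fst) (r ≫ prod.snd ≫ prod.fst)
        (r ≫ prod.snd ≫ prod.snd) (coprod.inr : S ⟶ S ⨿ S) coprod.inl coprod.inl :=
      ⟨(coprod.inr ≫ coprod.inr) ≫ e, by simp [heq', prod.lift_fst, prod.lift_snd, prod.lift_fst_assoc, prod.lift_snd_assoc, coprod.inl_desc, coprod.inr_desc, coprod.inl_desc_assoc, coprod.inr_desc_assoc, prod.map_fst, prod.map_snd, prod.map_fst_assoc, prod.map_snd_assoc, prod.lift_map, prod.comp_lift, coprod.desc_comp], by simp [heq', prod.lift_fst, prod.lift_snd, prod.lift_fst_assoc, prod.lift_snd_assoc, coprod.inl_desc, coprod.inr_desc, coprod.inl_desc_assoc, coprod.inr_desc_assoc, prod.map_fst, prod.map_snd, prod.map_fst_assoc, prod.map_snd_assoc, prod.lift_map, prod.comp_lift, coprod.desc_comp], by simp [heq', prod.lift_fst, prod.lift_snd, prod.lift_fst_assoc, prod.lift_snd_assoc, coprod.inl_desc, coprod.inr_desc, coprod.inl_desc_assoc, coprod.inr_desc_assoc, prod.map_fst,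 prod.map_snd, prod.map_fst_assoc, prod.map_snd_assoc, prod.lift_map, prod.comp_lift, coprod.desc_comp]⟩
    obtain ⟨f, h1, h2, h3⟩ := hmaj _ _ _ jm coprod.inl coprod.inr coprod.inl coprod.inr
      coprod.inl coprod.inr rel1 rel2 rel3
    refine ⟨f, ?_⟩
    apply Limits.prod.hom_ext
    · simpa [prod.lift_fst, prod.lift_snd, prod.lift_fst_assoc, prod.lift_snd_assoc, coprod.inl_desc, coprod.inr_desc, coprod.inl_desc_assoc, coprod.inr_desc_assoc, prod.map_fst, prod.map_snd, prod.map_fst_assoc, prod.map_snd_assoc, prod.lift_map, prod.comp_lift, coprod.desc_comp] using h1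
    · apply Limits.prod.hom_ext
      · simpa [prod.lift_fst, prod.lift_snd, prod.lift_fst_assoc, prod.lift_snd_assoc, coprod.inl_desc, coprod.inr_desc, coprod.inl_desc_assoc, coprod.inr_desc_assoc, prod.map_fst, prod.map_snd, prod.map_fst_assoc, prod.map_snd_assoc, prod.lift_map, prod.comp_lift, coprod.desc_comp] using h2
      · simpa [prod.lift_fst, prod.lift_snd, prod.lift_fst_assoc, prod.lift_snd_assoc, coprod.inl_desc, coprod.inr_desc, coprod.inl_desc_assoc, coprod.inr_desc_assoc, prod.map_fst, prod.map_snd, prod.map_fst_assoc, prod.map_snd_assoc, prod.lift_map, prod.comp_lift, coprod.desc_comp] using h3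
  · -- factorization condition ⇒ majority
    intro hfac A B D R r₁ r₂ r₃ jm S a₁ a₂ b₁ b₂ c₁ c₂ hrel1 hrel2 hrel3
    obtain ⟨f₁, hf₁a, hf₁b, hf₁c⟩ := hrel1
    obtain ⟨f₂, hf₂a, hf₂b, hf₂c⟩ := hrel2
    obtain ⟨f₃, hf₃a, hf₃b, hf₃c⟩ := hrel3
    obtain ⟨I, e, m, he, hm, hem⟩ := himg
      (prod.lift (coprod.desc coprod.inl (coprod.desc coprod.inl coprod.inr))
        (prod.lift (coprod.desc coprod.inl (coprod.desc coprod.inr coprod.inl))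
          (coprod.desc coprod.inr (coprod.desc coprod.inl coprod.inl)))
        : (S ⨿ (S ⨿ S)) ⟶ ((S ⨿ S) ⨯ ((S ⨿ S) ⨯ (S ⨿ S))))
    obtain ⟨f, hf⟩ := hfac S I e m he hm hem
    set ρ : R ⟶ A ⨯ (B ⨯ D) := prod.lift r₁ (prod.lift r₂ r₃) with hρdef
    haveI hρ : Mono ρ := by
      constructor
      intro T u v huv
      apply jm
      · have := huv =≫ prod.fst
        simpa [hρdef, prod.lift_fst, prod.lift_snd, prod.lift_fst_assoc, prod.lift_snd_assoc, coprod.inl_desc, coprod.inr_desc, coprod.inl_desc_assoc, coprod.inr_desc_assoc, prod.map_fst, prod.map_snd, prod.map_fst_assoc, prod.map_snd_assoc, prod.lift_map, prod.comp_lift, coprod.desc_comp] using this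
      · have := huv =≫ (prod.snd ≫ prod.fst)
        simpa [hρdef, prod.lift_fst, prod.lift_snd, prod.lift_fst_assoc, prod.lift_snd_assoc, coprod.inl_desc, coprod.inr_desc, coprod.inl_desc_assoc, coprod.inr_desc_assoc, prod.map_fst, prod.map_snd, prod.map_fst_assoc, prod.map_snd_assoc, prod.lift_map, prod.comp_lift, coprod.desc_comp] using this
      · have := huv =≫ (prod.snd ≫ prod.snd)
        simpa [hρdef, prod.lift_fst, prod.lift_snd, prod.lift_fst_assoc, prod.lift_snd_assoc, coprod.inl_desc, coprod.inr_desc, coprod.inl_desc_assoc, coprod.inr_desc_assoc, prod.map_fst, prod.map_snd, prod.map_fst_assoc, prod.map_snd_assoc, prod.lift_map, prod.comp_lift, coprod.desc_comp] using this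
    set φ : ((S ⨿ S) ⨯ ((S ⨿ S) ⨯ (S ⨿ S))) ⟶ A ⨯ (B ⨯ D) :=
      prod.map (coprod.desc a₁ a₂) (prod.map (coprod.desc b₁ b₂) (coprod.desc c₁ c₂))
      with hφdef
    have sq : CommSq (coprod.desc f₁ (coprod.desc f₂ f₃)) e ρ (m ≫ φ) := by
      constructor
      rw [← Category.assoc, hem]
      apply coprod.hom_ext
      · apply Limits.prod.hom_ext
        · simp only [hρdef, hφdef, hf₁a, Category.assoc, prod.lift_fst, prod.lift_snd, prod.lift_fst_assoc, prod.lift_snd_assoc, prod.map_fst, prod.map_snd, prod.map_fst_assoc, prod.map_snd_assoc, prod.comp_lift, coprod.inl_desc, coprod.inr_desc, coprod.inl_desc_assoc, coprod.inr_desc_assoc, coprod.desc_comp]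
        · apply Limits.prod.hom_ext
          · simp only [hρdef, hφdef, hf₁b, Category.assoc, prod.lift_fst, prod.lift_snd, prod.lift_fst_assoc, prod.lift_snd_assoc, prod.map_fst, prod.map_snd, prod.map_fst_assoc, prod.map_snd_assoc, prod.comp_lift, coprod.inl_desc, coprod.inr_desc, coprod.inl_desc_assoc, coprod.inr_desc_assoc, coprod.desc_comp]
          · simp only [hρdef, hφdef, hf₁c, Category.assoc, prod.lift_fst, prod.lift_snd, prod.lift_fst_assoc, prod.lift_snd_assoc, prod.map_fst, prod.map_snd, prod.map_fst_assoc, prod.map_snd_assoc, prod.comp_lift, coprod.inl_desc, coprod.inr_desc, coprod.inl_desc_assoc, coprod.inr_desc_assoc, coprod.desc_comp]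
      · apply coprod.hom_ext
        · apply Limits.prod.hom_ext
          · simp only [hρdef, hφdef, hf₂a, Category.assoc, prod.lift_fst, prod.lift_snd, prod.lift_fst_assoc, prod.lift_snd_assoc, prod.map_fst, prod.map_snd, prod.map_fst_assoc, prod.map_snd_assoc, prod.comp_lift, coprod.inl_desc, coprod.inr_desc, coprod.inl_desc_assoc, coprod.inr_desc_assoc, coprod.desc_comp]
          · apply Limits.prod.hom_ext
            · simp only [hρdef, hφdef, hf₂b, Category.assoc, prod.lift_fst, prod.lift_snd, prod.lift_fst_assoc, prod.lift_snd_assoc, prod.map_fst, prod.map_snd, prod.map_fst_assoc, prod.map_snd_assoc, prod.comp_lift, coprod.inl_desc, coprod.inr_desc, coprod.inl_desc_assoc, coprod.inr_desc_assoc, coprod.desc_comp]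
            · simp only [hρdef, hφdef, hf₂c, Category.assoc, prod.lift_fst, prod.lift_snd, prod.lift_fst_assoc, prod.lift_snd_assoc, prod.map_fst, prod.map_snd, prod.map_fst_assoc, prod.map_snd_assoc, prod.comp_lift, coprod.inl_desc, coprod.inr_desc, coprod.inl_desc_assoc, coprod.inr_desc_assoc, coprod.desc_comp]
        · apply Limits.prod.hom_ext
          · simp only [hρdef, hφdef, hf₃a, Category.assoc, prod.lift_fst, prod.lift_snd, prod.lift_fst_assoc, prod.lift_snd_assoc, prod.map_fst, prod.map_snd, prod.map_fst_assoc, prod.map_snd_assoc, prod.comp_lift, coprod.inl_desc, coprod.inr_desc, coprod.inl_desc_assoc, coprod.inr_desc_assoc, coprod.desc_comp]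
          · apply Limits.prod.hom_ext
            · simp only [hρdef, hφdef, hf₃b, Category.assoc, prod.lift_fst, prod.lift_snd, prod.lift_fst_assoc, prod.lift_snd_assoc, prod.map_fst, prod.map_snd, prod.map_fst_assoc, prod.map_snd_assoc, prod.comp_lift, coprod.inl_desc, coprod.inr_desc, coprod.inl_desc_assoc, coprod.inr_desc_assoc, coprod.desc_comp]
            · simp only [hρdef, hφdef, hf₃c, Category.assoc, prod.lift_fst, prod.lift_snd, prod.lift_fst_assoc, prod.lift_snd_assoc, prod.map_fst, prod.map_snd, prod.map_fst_assoc, prod.map_snd_assoc, prod.comp_lift, coprod.inl_desc, coprod.inr_desc, coprod.inl_desc_assoc, coprod.inr_desc_assoc, coprod.desc_comp]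
    haveI : HasLiftingProperty e ρ := he.llp ρ
    have hcomp : (f ≫ sq.lift) ≫ ρ = prod.lift a₁ (prod.lift b₁ c₁) := by
      rw [Category.assoc, sq.fac_right, ← Category.assoc, hf]
      apply Limits.prod.hom_ext
      · simp [hφdef, prod.lift_fst, prod.lift_snd, prod.lift_fst_assoc, prod.lift_snd_assoc, coprod.inl_desc, coprod.inr_desc, coprod.inl_desc_assoc, coprod.inr_desc_assoc, prod.map_fst, prod.map_snd, prod.map_fst_assoc, prod.map_snd_assoc, prod.lift_map, prod.comp_lift, coprod.desc_comp]
      · apply Limits.prod.hom_ext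
        · simp [hφdef, prod.lift_fst, prod.lift_snd, prod.lift_fst_assoc, prod.lift_snd_assoc, coprod.inl_desc, coprod.inr_desc, coprod.inl_desc_assoc, coprod.inr_desc_assoc, prod.map_fst, prod.map_snd, prod.map_fst_assoc, prod.map_snd_assoc, prod.lift_map, prod.comp_lift, coprod.desc_comp]
        · simp [hφdef, prod.lift_fst, prod.lift_snd, prod.lift_fst_assoc, prod.lift_snd_assoc, coprod.inl_desc, coprod.inr_desc, coprod.inl_desc_assoc, coprod.inr_desc_assoc, prod.map_fst, prod.map_snd, prod.map_fst_assoc, prod.map_snd_assoc, prod.lift_map, prod.comp_lift, coprod.desc_comp]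
    refine ⟨f ≫ sq.lift, ?_, ?_, ?_⟩
    · have := hcomp =≫ prod.fst
      simpa [hρdef, prod.lift_fst, prod.lift_snd, prod.lift_fst_assoc, prod.lift_snd_assoc, coprod.inl_desc, coprod.inr_desc, coprod.inl_desc_assoc, coprod.inr_desc_assoc, prod.map_fst, prod.map_snd, prod.map_fst_assoc, prod.map_snd_assoc, prod.lift_map, prod.comp_lift, coprod.desc_comp] using this
    · have := hcomp =≫ (prod.snd ≫ prod.fst)
      simpa [hρdef, prod.lift_fst, prod.lift_snd, prod.lift_fst_assoc, prod.lift_snd_assoc, coprod.inl_desc, coprod.inr_desc, coprod.inl_desc_assoc, coprod.inr_desc_assoc, prod.map_fst, prod.map_snd, prod.map_fst_assoc, prod.map_snd_assoc, prod.lift_map, prod.comp_lift, coprod.desc_comp] using this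
    · have := hcomp =≫ (prod.snd ≫ prod.snd)
      simpa [hρdef, prod.lift_fst, prod.lift_snd, prod.lift_fst_assoc, prod.lift_snd_assoc, coprod.inl_desc, coprod.inr_desc, coprod.inl_desc_assoc, coprod.inr_desc_assoc, prod.map_fst, prod.map_snd, prod.map_fst_assoc, prod.map_snd_assoc, prod.lift_map, prod.comp_lift, coprod.desc_comp] using this
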